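/- Let G be a finite abelian group, Γ ⊆ Ĝ a nonempty set of characters, and ν, ν': Γ → (0,2] width functions with ν'(γ) ≤ ν(γ) for all γ ∈ Γ. Then |Bohr(Γ, ν')| ≥ (∏_{γ∈Γ} ν'(γ)/(4ν(γ)))·|Bohr(Γ, ν)|. -/

import Mathlib

open scoped Classical

/-- The Bohr set `Bohr(Γ, ν) = {x ∈ G : |γ(x) − 1| ≤ ν(γ) for all γ ∈ Γ}`. -/
noncomputable def bohrSet {G : Type*} [AddCommGroup G] [Fintype G]
    (Γ : Finset (AddChar G ℂ)) (ν : AddChar G ℂ → ℝ) : Finset G :=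
  Finset.univ.filter fun x => ∀ γ ∈ Γ, ‖γ x - 1‖ ≤ ν γ

private lemma abs_exp_mul_I_sub_one' (θ : ℝ) :
    ‖Complex.exp (θ * Complex.I) - 1‖ = 2 * |Real.sin (θ / 2)| := by
  have h1 : Complex.exp (θ * Complex.I) - 1
      = Complex.mk (Real.cos θ - 1) (Real.sin θ) := by
    apply Complex.ext
    · simp [Complex.exp_ofReal_mul_I_re]
    · simp [Complex.exp_ofReal_mul_I_im]
  rw [h1, Complex.norm_def, Complex.normSq_mk]
  have h2 : (Real.cos θ - 1) * (Real.cos θ - 1) + Real.sin θ * Real.sin θ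
      = (2 * |Real.sin (θ / 2)|) ^ 2 := by
    have hs : Real.sin (θ / 2) ^ 2 = 1 / 2 - Real.cos θ / 2 := by
      have := Real.sin_sq_eq_half_sub (θ / 2)
      rwa [show 2 * (θ / 2) = θ by ring] at this
    have hp := Real.sin_sq_add_cos_sq θ
    nlinarith [sq_abs (Real.sin (θ / 2))]
  rw [h2, Real.sqrt_sq (by positivity)]

private lemma sin_abs_of_abs_le_pi {t : ℝ} (h : |t| ≤ Real.pi) :
    Real.sin |t| = |Real.sin t| := by
  rcases le_or_gt 0 t with h0 | h0
  · rw [abs_of_nonneg h0,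
      abs_of_nonneg (Real.sin_nonneg_of_nonneg_of_le_pi h0 ((le_abs_self t).trans h))]
  · have ht : -Real.pi ≤ t := by
      have := neg_abs_le t; linarith
    rw [abs_of_neg h0, Real.sin_neg,
      abs_of_nonpos (Real.sin_nonpos_of_nonpos_of_neg_pi_le h0.le ht)]

set_option maxHeartbeats 1000000 in
/-- Lower bound for the size of a Bohr set of smaller width:
`|Bohr(Γ,ν')| ≥ (∏_{γ∈Γ} ν'(γ)/(4ν(γ))) · |Bohr(Γ,ν)|`. -/
theorem bohr_size_lower_bound {G : Type*} [AddCommGroup G] [Fintype G]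
    (Γ : Finset (AddChar G ℂ)) (hΓ : Γ.Nonempty) (ν ν' : AddChar G ℂ → ℝ)
    (hν : ∀ γ ∈ Γ, 0 < ν γ ∧ ν γ ≤ 2) (hν' : ∀ γ ∈ Γ, 0 < ν' γ ∧ ν' γ ≤ 2)
    (hle : ∀ γ ∈ Γ, ν' γ ≤ ν γ) :
    (∏ γ ∈ Γ, ν' γ / (4 * ν γ)) * ((bohrSet Γ ν).card : ℝ) ≤
      ((bohrSet Γ ν').card : ℝ) := by
  classical
  rcases Finset.eq_empty_or_nonempty (bohrSet Γ ν) with he | hne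
  · rw [he]; simpa using Nat.cast_nonneg (bohrSet Γ ν').card
  -- every character value is exp of its arg
  have hexp : ∀ (γ : AddChar G ℂ) (x : G),
      γ x = Complex.exp ((Complex.arg (γ x) : ℂ) * Complex.I) := by
    intro γ x
    conv_lhs => rw [← Complex.norm_mul_exp_arg_mul_I (γ x)]
    have h1 : ‖γ x‖ = 1 := γ.norm_apply x
    rw [h1, Complex.ofReal_one, one_mul]
  have habs : ∀ (γ : AddChar G ℂ) (x : G),
      ‖γ x - 1‖ = 2 * |Real.sin (Complex.arg (γ x) / 2)| := by
    intro γ x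
    have h := abs_exp_mul_I_sub_one' (Complex.arg (γ x))
    rw [← hexp γ x] at h
    exact h
  -- half-arc widths
  set A : AddChar G ℂ → ℝ := fun γ => Real.arcsin (ν γ / 2) with hA
  set B : AddChar G ℂ → ℝ := fun γ => Real.arcsin (ν' γ / 2) with hB
  have hBpos : ∀ γ ∈ Γ, 0 < B γ := fun γ hγ =>
    Real.arcsin_pos.2 (by linarith [(hν' γ hγ).1])
  have hBle : ∀ γ ∈ Γ, B γ ≤ Real.pi / 2 := fun γ hγ => Real.arcsin_le_pi_div_two _
  have harg2 : ∀ (γ : AddChar G ℂ) (x : G), |Complex.arg (γ x) / 2| ≤ Real.pi / 2 := by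
    intro γ x
    have h1 := Complex.arg_le_pi (γ x)
    have h2 := Complex.neg_pi_lt_arg (γ x)
    rw [abs_le]; constructor <;> linarith
  -- members of bohrSet Γ ν have small args
  have harg_le : ∀ x ∈ bohrSet Γ ν, ∀ γ ∈ Γ, |Complex.arg (γ x) / 2| ≤ A γ := by
    intro x hx γ hγ
    have h1 : ‖γ x - 1‖ ≤ ν γ := (Finset.mem_filter.1 hx).2 γ hγ
    rw [habs] at h1
    have h2 : |Real.sin (Complex.arg (γ x) / 2)| ≤ ν γ / 2 := by linarith
    have h3 := harg2 γ x
    have hpi := Real.pi_pos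
    have h4 : |Complex.arg (γ x) / 2| = Real.arcsin (Real.sin |Complex.arg (γ x) / 2|) :=
      (Real.arcsin_sin (by linarith [abs_nonneg (Complex.arg (γ x) / 2)]) h3).symm
    rw [h4, sin_abs_of_abs_le_pi (by linarith)]
    exact Real.monotone_arcsin h2
  -- the cell map
  set f : G → (↥Γ → ℤ) := fun x γ =>
    ⌊(Complex.arg ((γ : AddChar G ℂ) x) / 2 + A γ) / B γ⌋ with hf
  set t : Finset (↥Γ → ℤ) :=
    Fintype.piFinset fun γ : ↥Γ => Finset.Icc 0 ⌊2 * A (γ : AddChar G ℂ) / B γ⌋ with ht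
  have hmaps : ∀ x ∈ bohrSet Γ ν, f x ∈ t := by
    intro x hx
    rw [ht, Fintype.mem_piFinset]
    intro γ
    have hγ := γ.2
    have h1 := harg_le x hx γ hγ
    rw [abs_le] at h1
    have hBp := hBpos γ hγ
    rw [Finset.mem_Icc]
    constructor
    · apply Int.floor_nonneg.2
      apply div_nonneg _ hBp.le
      linarith [h1.1]
    · apply Int.floor_le_floor
      gcongr
      linarith [h1.2]
  -- pigeonhole
  have hsum := Finset.card_eq_sum_card_fiberwise hmaps
  have htne : t.Nonempty := ⟨f hne.choose, hmaps _ hne.choose_spec⟩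
  obtain ⟨k, hk, hks⟩ : ∃ k ∈ t,
      (bohrSet Γ ν).card ≤ t.card * ((bohrSet Γ ν).filter fun x => f x = k).card := by
    refine Finset.exists_le_of_sum_le htne ?_
    rw [Finset.sum_const, smul_eq_mul, ← Finset.mul_sum, ← hsum]
  set F := (bohrSet Γ ν).filter fun x => f x = k with hF
  have hFne : F.Nonempty := by
    rw [Finset.nonempty_iff_ne_empty]
    intro h
    rw [h, Finset.card_empty, Nat.mul_zero] at hks
    have := Finset.card_pos.2 hne
    omega
  obtain ⟨x₀, hx₀⟩ := hFne
  -- the fiber injects into bohrSet Γ ν' by translation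
  have hmaps' : ∀ x ∈ F, x - x₀ ∈ bohrSet Γ ν' := by
    intro x hx
    simp only [bohrSet, Finset.mem_filter, Finset.mem_univ, true_and]
    intro γ hγ
    have hfeq : f x = f x₀ := by
      rw [(Finset.mem_filter.1 hx).2, (Finset.mem_filter.1 hx₀).2]
    have hfl : ⌊(Complex.arg (γ x) / 2 + A γ) / B γ⌋
        = ⌊(Complex.arg (γ x₀) / 2 + A γ) / B γ⌋ := congrFun hfeq ⟨γ, hγ⟩
    have hBp := hBpos γ hγ
    have h1 := Int.abs_sub_lt_one_of_floor_eq_floor hfl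
    set a := Complex.arg (γ x) with ha
    set b := Complex.arg (γ x₀) with hb
    have h2 : |(a - b) / 2| < B γ := by
      have he : (a / 2 + A γ) / B γ - (b / 2 + A γ) / B γ = ((a - b) / 2) / B γ := by
        field_simp
        ring
      rw [he, abs_div, abs_of_pos hBp, div_lt_one hBp] at h1
      exact h1
    have hgd : γ (x - x₀) = Complex.exp (((a - b : ℝ) : ℂ) * Complex.I) := by
      rw [sub_eq_add_neg, AddChar.map_add_eq_mul, AddChar.map_neg_eq_inv]
      rw [hexp γ x, hexp γ x₀, ← Complex.exp_neg, ← Complex.exp_add]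
      congr 1
      push_cast
      ring
    rw [hgd, abs_exp_mul_I_sub_one']
    have hBle2 := hBle γ hγ
    have hpi := Real.pi_pos
    have h4 : |Real.sin ((a - b) / 2)| = Real.sin |(a - b) / 2| :=
      (sin_abs_of_abs_le_pi (by linarith)).symm
    rw [h4]
    have h5 : Real.sin |(a - b) / 2| ≤ Real.sin (B γ) :=
      Real.sin_le_sin_of_le_of_le_pi_div_two
        (by linarith [abs_nonneg ((a - b) / 2)]) hBle2 h2.le
    have h6 : Real.sin (B γ) = ν' γ / 2 :=
      Real.sin_arcsin (by linarith [(hν' γ hγ).1]) (by linarith [(hν' γ hγ).2])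
    linarith
  have hcard2 : F.card ≤ (bohrSet Γ ν').card := by
    apply Finset.card_le_card_of_injOn (fun x => x - x₀) hmaps'
    intro p _ q _ h
    exact sub_left_injective h
  -- counting the cells
  have htcardeq : t.card = ∏ γ ∈ Γ.attach,
      (⌊2 * A (γ : AddChar G ℂ) / B (γ : AddChar G ℂ)⌋ + 1).toNat := by
    rw [ht, Fintype.card_piFinset, Finset.univ_eq_attach]
    refine Finset.prod_congr rfl fun γ _ => ?_
    rw [Int.card_Icc, sub_zero]
  have hN : ∀ γ ∈ Γ, ((⌊2 * A γ / B γ⌋ + 1).toNat : ℝ) ≤ 4 * ν γ / ν' γ := by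
    intro γ hγ
    obtain ⟨hν1, hν2⟩ := hν γ hγ
    obtain ⟨hν'1, hν'2⟩ := hν' γ hγ
    have hBp := hBpos γ hγ
    have hApos : 0 < A γ := Real.arcsin_pos.2 (by linarith)
    have hfl0 : (0 : ℤ) ≤ ⌊2 * A γ / B γ⌋ := Int.floor_nonneg.2 (by positivity)
    have hcast : ((⌊2 * A γ / B γ⌋ + 1).toNat : ℝ) = (⌊2 * A γ / B γ⌋ : ℝ) + 1 := by
      have h := Int.toNat_of_nonneg (show (0 : ℤ) ≤ ⌊2 * A γ / B γ⌋ + 1 by omega)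
      exact_mod_cast congrArg (fun z : ℤ => (z : ℝ)) h
    have hpi := Real.pi_pos
    have hAe : A γ = Real.arcsin (ν γ / 2) := by rw [hA]
    have hAb : A γ ≤ Real.pi / 2 * (ν γ / 2) := by
      have harc1 : (0 : ℝ) ≤ Real.arcsin (ν γ / 2) := Real.arcsin_nonneg.2 (by linarith)
      have h := Real.mul_le_sin harc1 (Real.arcsin_le_pi_div_two (ν γ / 2))
      rw [Real.sin_arcsin (by linarith) (by linarith)] at h
      rw [← hAe] at h
      have h2 := mul_le_mul_of_nonneg_left h (by positivity : (0 : ℝ) ≤ Real.pi / 2)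
      have h3 : Real.pi / 2 * (2 / Real.pi * A γ) = A γ := by
        field_simp
      linarith [h3 ▸ h2]
    have hBb : ν' γ / 2 ≤ B γ := by
      have h6 : Real.sin (B γ) = ν' γ / 2 :=
        Real.sin_arcsin (by linarith) (by linarith)
      linarith [Real.sin_lt hBp]
    have hfl : (⌊2 * A γ / B γ⌋ : ℝ) ≤ 2 * A γ / B γ := Int.floor_le _
    have hratio : 2 * A γ / B γ ≤ Real.pi * (ν γ / ν' γ) := by
      rw [div_le_iff₀ hBp]
      have e1 : 2 * A γ ≤ Real.pi * ν γ / 2 := by nlinarith [hAb]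
      have e2 : Real.pi * ν γ / 2 ≤ Real.pi * (ν γ / ν' γ) * B γ := by
        rw [mul_div_assoc, mul_assoc]
        have : ν γ / 2 ≤ ν γ / ν' γ * B γ := by
          rw [div_mul_eq_mul_div, le_div_iff₀ hν'1]
          nlinarith [hBb]
        nlinarith [this]
      linarith
    rw [hcast]
    have hgoal : 4 * ν γ / ν' γ = 4 * (ν γ / ν' γ) := by ring
    rw [hgoal]
    set r := ν γ / ν' γ with hr
    have hr1 : 1 ≤ r := by
      rw [hr, le_div_iff₀ hν'1]; linarith [hle γ hγ]
    rcases le_or_gt ((⌊2 * A γ / B γ⌋ : ℝ)) 3 with hcase | hcase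
    · nlinarith [hr1]
    · have h4 : (4 : ℝ) ≤ 2 * A γ / B γ := by
        have : (3 : ℤ) < ⌊2 * A γ / B γ⌋ := by exact_mod_cast hcase
        have h5 : (4 : ℤ) ≤ ⌊2 * A γ / B γ⌋ := by omega
        have h6 : ((4 : ℤ) : ℝ) ≤ (⌊2 * A γ / B γ⌋ : ℝ) := by exact_mod_cast h5
        push_cast at h6
        linarith
      have h7 : (⌊2 * A γ / B γ⌋ : ℝ) ≤ Real.pi * r := hfl.trans hratio
      have h8 : 4 ≤ Real.pi * r := h4.trans hratio
      nlinarith [h7, h8, hr1, hpi, Real.pi_gt_three, Real.pi_lt_d2,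
        mul_nonneg (sub_nonneg.2 Real.pi_le_four) (sub_nonneg.2 h8)]
  have htcard : (t.card : ℝ) ≤ ∏ γ ∈ Γ, 4 * ν γ / ν' γ := by
    rw [htcardeq]
    push_cast
    calc (∏ γ ∈ Γ.attach, ((⌊2 * A (γ : AddChar G ℂ) / B (γ : AddChar G ℂ)⌋ + 1).toNat : ℝ))
        ≤ ∏ γ ∈ Γ.attach, 4 * ν (γ : AddChar G ℂ) / ν' (γ : AddChar G ℂ) :=
          Finset.prod_le_prod (fun γ _ => by positivity) (fun γ _ => hN γ.1 γ.2)
      _ = ∏ γ ∈ Γ, 4 * ν γ / ν' γ := Finset.prod_attach Γ (fun γ => 4 * ν γ / ν' γ)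
  -- assemble
  have hpnn : 0 ≤ ∏ γ ∈ Γ, ν' γ / (4 * ν γ) :=
    Finset.prod_nonneg fun γ hγ => by
      have := (hν γ hγ).1; have := (hν' γ hγ).1; positivity
  have hks' : ((bohrSet Γ ν).card : ℝ) ≤ (t.card : ℝ) * F.card := by exact_mod_cast hks
  have hone : ∏ γ ∈ Γ, (ν' γ / (4 * ν γ) * (4 * ν γ / ν' γ)) = 1 := by
    apply Finset.prod_eq_one
    intro γ hγ
    have h1 := (hν γ hγ).1
    have h2 := (hν' γ hγ).1
    field_simp
  calc (∏ γ ∈ Γ, ν' γ / (4 * ν γ)) * ((bohrSet Γ ν).card : ℝ)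
      ≤ (∏ γ ∈ Γ, ν' γ / (4 * ν γ)) * ((t.card : ℝ) * F.card) :=
        mul_le_mul_of_nonneg_left hks' hpnn
    _ ≤ (∏ γ ∈ Γ, ν' γ / (4 * ν γ)) * ((∏ γ ∈ Γ, 4 * ν γ / ν' γ) * F.card) := by
        apply mul_le_mul_of_nonneg_left _ hpnn
        exact mul_le_mul_of_nonneg_right htcard (Nat.cast_nonneg _)
    _ = (∏ γ ∈ Γ, (ν' γ / (4 * ν γ) * (4 * ν γ / ν' γ))) * F.card := by
        rw [Finset.prod_mul_distrib]; ring
    _ = F.card := by rw [hone, one_mul]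
    _ ≤ ((bohrSet Γ ν').card : ℝ) := by exact_mod_cast hcard2
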